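/- Let X be a connected multigraph with 2 ≤ deg(x) ≤ M for all x, that is not a cycle and in which small cycles are dense. Then X is roughly isometric to its symmetrized oriented line graph (vertex set = oriented edges E, with e ∼ f iff e → f or f → e), via the map φ(e) = e⁻. -/

import Mathlib

open scoped BigOperators
open Filter

/-- A multigraph given by its set of *oriented* edges. Each oriented edge `e`
has an initial vertex `tail e = e⁻`, a terminal vertex `head e = e⁺`, and a
reversal `bar e = ě` with `ě ≠ e` (loops are counted twice). Local finiteness
is built in. -/
structure Multigraph where
  V : Type
  E : Type
  tail : E → V
  head : E → V
  bar : E → E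
  bar_bar : ∀ e, bar (bar e) = e
  bar_ne : ∀ e, bar e ≠ e
  head_bar : ∀ e, head (bar e) = tail e
  locFin : ∀ x, {e | tail e = x}.Finite

namespace Multigraph
variable (G : Multigraph)

/-- The degree of a vertex: the number of oriented edges emanating from it. -/
noncomputable def deg (x : G.V) : ℕ := (G.locFin x).toFinset.card

/-- `e → f`: `f` may follow `e` in a non-backtracking walk. -/
def Step (e f : G.E) : Prop := G.tail f = G.head e ∧ f ≠ G.bar e

/-- `e ⇒ f`: there is a non-backtracking walk from `e` to `f`. -/
def Reach : G.E → G.E → Prop := Relation.ReflTransGen G.Step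

/-- One-step transition probabilities of the edge non-backtracking random walk. -/
noncomputable def q (e f : G.E) : ℝ :=
  open Classical in
  if G.Step e f then 1 / ((G.deg (G.head e) : ℝ) - 1) else 0

/-- `n`-step transition probabilities `q_E^(n)` of the edge NBRW. -/
noncomputable def qn (G : Multigraph) : ℕ → G.E → G.E → ℝ
  | 0, e, f => open Classical in if e = f then 1 else 0
  | n + 1, e, f => ∑' g : G.E, qn G n e g * G.q g f

/-- Vertex NBRW transition probabilities:
`q^(n)(x,y) = (1/deg x) ∑_{e⁺=x, f⁺=y} q_E^(n)(e,f)`. -/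
noncomputable def qv (n : ℕ) (x y : G.V) : ℝ :=
  (1 / (G.deg x : ℝ)) *
    ∑' (e : {e : G.E // G.head e = x}) (f : {f : G.E // G.head f = y}),
      G.qn n e.1 f.1

def Adj (x y : G.V) : Prop := ∃ e : G.E, G.tail e = x ∧ G.head e = y

def Connected : Prop := ∀ x y : G.V, Relation.ReflTransGen G.Adj x y

/-- There is a walk of length `n` from `x` to `y`. -/
def WalkLen (G : Multigraph) : ℕ → G.V → G.V → Prop
  | 0, x, y => x = y
  | n + 1, x, y => ∃ z, G.Adj x z ∧ WalkLen G n z y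

/-- Graph distance. -/
noncomputable def dist (x y : G.V) : ℕ := sInf {n | G.WalkLen n x y}

/-- A cycle: a nonempty list of distinct oriented edges, with distinct initial
vertices, such that consecutive edges (cyclically) form non-backtracking steps. -/
def IsCycle (l : List G.E) : Prop :=
  l ≠ [] ∧ l.Nodup ∧ (l.map G.tail).Nodup ∧ List.Chain' G.Step (l ++ l.take 1)

/-- Small cycles are dense: some radius `R` works for every ball. -/
def SmallCyclesDense : Prop :=
  ∃ R : ℕ, ∀ x : G.V, ∃ l : List G.E, G.IsCycle l ∧ ∀ e ∈ l, G.dist x (G.tail e) ≤ R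

/-- `X` is a (finite) cycle graph. -/
def IsCycleGraph : Prop := (Set.univ : Set G.V).Finite ∧ ∀ x, G.deg x = 2

def Bipartite : Prop := ∃ c : G.V → Bool, ∀ e : G.E, c (G.tail e) ≠ c (G.head e)

end Multigraph

/-- There is a walk of length `n` between two points for a relation `r`. -/
def relWalkLen {α : Type} (r : α → α → Prop) : ℕ → α → α → Prop
  | 0, a, b => a = b
  | n + 1, a, b => ∃ c, r a c ∧ relWalkLen r n c b

/-- Graph distance of the symmetrized oriented line graph of `G`: vertices are the
oriented edges of `G`, with `e ∼ f` iff `e → f` or `f → e`. -/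
noncomputable def solgDist (G : Multigraph) (e f : G.E) : ℕ :=
  sInf {n | relWalkLen (fun a b => G.Step a b ∨ G.Step b a) n e f}
section Aux
open Multigraph

variable {G : Multigraph}

def SymE (G : Multigraph) (a b : G.E) : Prop := G.Step a b ∨ G.Step b a

lemma solgDist_eq (e f : G.E) : solgDist G e f = sInf {n | relWalkLen (SymE G) n e f} := rfl

lemma tail_bar (e : G.E) : G.tail (G.bar e) = G.head e := by
  conv_rhs => rw [← G.bar_bar e]
  exact (G.head_bar _).symm

lemma relWalkLen_trans {α} {r : α → α → Prop} :
    ∀ {m n : ℕ} {a b c : α}, relWalkLen r m a b → relWalkLen r n b c → relWalkLen r (m+n) a c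
  | 0, n, a, b, c, h1, h2 => by
      rw [show a = b from h1, Nat.zero_add]; exact h2
  | m+1, n, a, b, c, h1, h2 => by
      obtain ⟨d, hd, h1'⟩ := h1
      rw [Nat.succ_add]
      exact ⟨d, hd, relWalkLen_trans h1' h2⟩

lemma relWalkLen_single {α} {r : α → α → Prop} {a b : α} (h : r a b) : relWalkLen r 1 a b :=
  ⟨b, h, rfl⟩

lemma relWalkLen_symm {α} {r : α → α → Prop} (hr : ∀ a b, r a b → r b a) :
    ∀ {n : ℕ} {a b : α}, relWalkLen r n a b → relWalkLen r n b a
  | 0, a, b, h => (show a = b from h).symm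
  | n+1, a, b, h => by
      obtain ⟨c, hc, h'⟩ := h
      have := relWalkLen_trans (relWalkLen_symm hr h') (relWalkLen_single (hr _ _ hc))
      simpa using this

lemma step_bar {a b : G.E} (h : G.Step a b) : G.Step (G.bar b) (G.bar a) := by
  obtain ⟨h1, h2⟩ := h
  refine ⟨?_, ?_⟩
  · rw [tail_bar, G.head_bar, h1]
  · rw [G.bar_bar]; exact fun hc => h2 hc.symm

lemma sym_symm {a b : G.E} (h : SymE G a b) : SymE G b a := h.symm

lemma sym_bar {a b : G.E} (h : SymE G a b) : SymE G (G.bar a) (G.bar b) := by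
  rcases h with h | h
  · exact Or.inr (step_bar h)
  · exact Or.inl (step_bar h)

lemma walk_bar {n : ℕ} {a b : G.E} (h : relWalkLen (SymE G) n a b) :
    relWalkLen (SymE G) n (G.bar a) (G.bar b) := by
  induction n generalizing a with
  | zero => rw [show a = b from h]; rfl
  | succ n ih => obtain ⟨c, hc, h'⟩ := h; exact ⟨G.bar c, sym_bar hc, ih h'⟩

lemma same_tail_step {a b : G.E} (ht : G.tail a = G.tail b) (hne : b ≠ a) :
    G.Step (G.bar a) b := by
  refine ⟨?_, ?_⟩
  · rw [G.head_bar, ht]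
  · rw [G.bar_bar]; exact hne

end Aux
section Aux2
open Multigraph

variable {G : Multigraph}

/-- Propagation of reversibility along shared endpoints. -/
lemma rev_propagate {e f : G.E} {n : ℕ}
    (hshare : G.tail e = G.tail f ∨ G.tail e = G.head f ∨ G.head e = G.tail f ∨
      G.head e = G.head f)
    (h : relWalkLen (SymE G) n f (G.bar f)) :
    ∃ m ≤ n + 2, relWalkLen (SymE G) m e (G.bar e) := by
  by_cases hef : e = f
  · exact ⟨n, by omega, hef ▸ h⟩
  by_cases hebf : e = G.bar f
  · subst hebf
    refine ⟨n, by omega, ?_⟩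
    rw [G.bar_bar]
    exact relWalkLen_symm (fun _ _ => sym_symm) h
  have hsym : SymE G e f ∨ SymE G e (G.bar f) := by
    rcases hshare with h1 | h1 | h1 | h1
    · exact Or.inr (Or.inr (same_tail_step h1.symm hef))
    · exact Or.inl (Or.inr ⟨h1, hebf⟩)
    · refine Or.inl (Or.inl ⟨h1.symm, fun hc => hebf ?_⟩)
      rw [hc, G.bar_bar]
    · refine Or.inr ?_
      have : G.Step (G.bar (G.bar f)) (G.bar e) := by
        refine same_tail_step ?_ ?_
        · rw [tail_bar, tail_bar, h1]
        · intro hc; exact hef (by rw [← G.bar_bar e, hc, G.bar_bar])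
      rw [G.bar_bar] at this
      have h2 : SymE G (G.bar e) f := Or.inr this
      have h3 := sym_bar h2
      rw [G.bar_bar] at h3
      exact h3
  rcases hsym with hs | hs
  · refine ⟨1 + (n + 1), by omega, ?_⟩
    refine relWalkLen_trans (relWalkLen_single hs) (relWalkLen_trans h ?_)
    exact relWalkLen_single (sym_symm (sym_bar hs))
  · refine ⟨1 + (n + 1), by omega, ?_⟩
    refine relWalkLen_trans (relWalkLen_single hs) ?_
    have hrev : relWalkLen (SymE G) n (G.bar f) f := by
      have := relWalkLen_symm (fun _ _ => sym_symm) h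
      exact this
    refine relWalkLen_trans hrev (relWalkLen_single ?_)
    have := sym_bar hs
    rw [G.bar_bar] at this
    exact sym_symm this

lemma walkLen_trans : ∀ {m n : ℕ} {x y z : G.V},
    G.WalkLen m x y → G.WalkLen n y z → G.WalkLen (m + n) x z
  | 0, n, x, y, z, h1, h2 => by rw [show x = y from h1, Nat.zero_add]; exact h2
  | m+1, n, x, y, z, h1, h2 => by
      obtain ⟨w, hw, h1'⟩ := h1
      rw [Nat.succ_add]
      exact ⟨w, hw, walkLen_trans h1' h2⟩

lemma exists_walkLen {x y : G.V} (h : Relation.ReflTransGen G.Adj x y) :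
    ∃ n, G.WalkLen n x y := by
  induction h with
  | refl => exact ⟨0, rfl⟩
  | tail _ hadj ih =>
      obtain ⟨n, hn⟩ := ih
      exact ⟨n + 1, walkLen_trans hn ⟨_, hadj, rfl⟩⟩

lemma walkLen_dist (hconn : G.Connected) (x y : G.V) : G.WalkLen (G.dist x y) x y :=
  Nat.sInf_mem (exists_walkLen (hconn x y))

lemma dist_le {n : ℕ} {x y : G.V} (h : G.WalkLen n x y) : G.dist x y ≤ n :=
  Nat.sInf_le h

/-- Transport a reversal bound along a vertex walk. -/
lemma rev_along {N : ℕ} : ∀ {d : ℕ} {x y : G.V}, G.WalkLen d x y →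
    ∀ {c : G.E}, G.tail c = y → (∃ n ≤ N, relWalkLen (SymE G) n c (G.bar c)) →
    ∀ {e : G.E}, G.tail e = x → ∃ n ≤ N + 2 * (d + 1), relWalkLen (SymE G) n e (G.bar e)
  | 0, x, y, hxy, c, hc, hrev, e, he => by
      obtain ⟨n, hn, hw⟩ := hrev
      obtain ⟨m, hm, hw'⟩ := rev_propagate (e := e) (f := c)
        (Or.inl (by rw [he, show x = y from hxy, hc])) hw
      exact ⟨m, by omega, hw'⟩
  | d+1, x, y, hxy, c, hc, hrev, e, he => by
      obtain ⟨z, ⟨g, hg1, hg2⟩, hw⟩ := hxy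
      obtain ⟨n, hn, hgw⟩ := rev_along hw hc hrev (e := G.bar g) (by rw [tail_bar, hg2])
      have hgw' : relWalkLen (SymE G) n g (G.bar g) := by
        have := relWalkLen_symm (fun _ _ => sym_symm) hgw
        rw [G.bar_bar] at this
        exact this
      obtain ⟨m, hm, hw'⟩ := rev_propagate (e := e) (f := g)
        (Or.inl (by rw [he, hg1])) hgw'
      exact ⟨m, by omega, hw'⟩

end Aux2
section Aux3
open Multigraph

variable {G : Multigraph}

lemma cycle_step {l : List G.E} (hne : l ≠ []) (hch : List.Chain' G.Step (l ++ l.take 1)) :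
    ∀ i (h : i < l.length),
      G.Step (l[i]'h) (l[(i+1) % l.length]'(Nat.mod_lt _ (lt_of_le_of_lt (Nat.zero_le i) h))) := by
  intro i hi
  have hk : 0 < l.length := List.length_pos_iff.mpr hne
  have hlen : (l ++ l.take 1).length = l.length + 1 := by
    simp [List.length_take]; omega
  have hstep := List.isChain_iff_getElem.mp hch i (by simp [hlen]; omega)
  have e1 : (l ++ l.take 1)[i]'(by omega) = l[i] := List.getElem_append_left hi
  by_cases hi1 : i + 1 < l.length
  · have e2 : (l ++ l.take 1)[i+1]'(by omega) = l[i+1] := List.getElem_append_left hi1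
    rw [e1, e2] at hstep
    simp only [Nat.mod_eq_of_lt hi1]
    exact hstep
  · have hieq : i + 1 = l.length := by omega
    have e2 : (l ++ l.take 1)[i+1]'(by omega) = l[0] := by
      rw [List.getElem_append_right (by omega)]
      simp [hieq]
    rw [e1, e2] at hstep
    rw [hieq]
    simp only [Nat.mod_self]
    exact hstep

lemma cycle_pred {l : List G.E} (hne : l ≠ []) (hch : List.Chain' G.Step (l ++ l.take 1)) :
    ∀ c ∈ l, ∃ cp ∈ l, G.Step cp c := by
  intro c hc
  obtain ⟨i, hi, rfl⟩ := List.getElem_of_mem hc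
  have hk : 0 < l.length := List.length_pos_iff.mpr hne
  cases i with
  | zero =>
      refine ⟨l[l.length - 1], List.getElem_mem _, ?_⟩
      have := cycle_step hne hch (l.length - 1) (by omega)
      have heq : (l.length - 1 + 1) % l.length = 0 := by
        rw [show l.length - 1 + 1 = l.length by omega, Nat.mod_self]
      simp only [heq] at this
      exact this
  | succ j =>
      refine ⟨l[j], List.getElem_mem (by omega), ?_⟩
      have := cycle_step hne hch j (by omega)
      simp only [Nat.mod_eq_of_lt hi] at this
      exact this

lemma exists_branch (hconn : G.Connected) (hnc : ¬ G.IsCycleGraph)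
    {l : List G.E} (hl : G.IsCycle l) :
    ∃ c ∈ l, ∃ cp h : G.E, G.Step cp c ∧ G.tail h = G.tail c ∧ h ≠ c ∧ h ≠ G.bar cp := by
  classical
  obtain ⟨hne, _, _, hch⟩ := hl
  by_contra hcon
  push_neg at hcon
  apply hnc
  set T : Set G.V := {x | ∃ c ∈ l, G.tail c = x} with hT
  have head_mem : ∀ c ∈ l, G.head c ∈ T := by
    intro c hc
    obtain ⟨i, hi, rfl⟩ := List.getElem_of_mem hc
    have hstep := cycle_step hne hch i hi
    exact ⟨_, List.getElem_mem _, hstep.1⟩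
  have closure : ∀ x ∈ T, ∀ z, G.Adj x z → z ∈ T := by
    rintro x ⟨c, hc, rfl⟩ z ⟨g, hg1, hg2⟩
    obtain ⟨cp, hcp, hstep⟩ := cycle_pred hne hch c hc
    rcases eq_or_ne g c with rfl | hgc
    · exact hg2 ▸ head_mem g hc
    · have := hcon c hc cp g hstep hg1 hgc
      subst this
      rw [← hg2, G.head_bar]
      exact ⟨cp, hcp, rfl⟩
  obtain ⟨c₀, hc₀⟩ := List.exists_mem_of_ne_nil l hne
  have univT : ∀ x : G.V, x ∈ T := by
    intro x
    have hrt := hconn (G.tail c₀) x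
    induction hrt with
    | refl => exact ⟨c₀, hc₀, rfl⟩
    | tail _ hadj ih => exact closure _ ih _ hadj
  constructor
  · refine Set.Finite.subset (Set.Finite.image G.tail l.finite_toSet) ?_
    intro x _
    obtain ⟨c, hc, rfl⟩ := univT x
    exact ⟨c, hc, rfl⟩
  · intro x
    obtain ⟨c, hc, rfl⟩ := univT x
    obtain ⟨cp, hcp, hstep⟩ := cycle_pred hne hch c hc
    have hset : (G.locFin (G.tail c)).toFinset = {c, G.bar cp} := by
      ext e
      simp only [Set.Finite.mem_toFinset, Set.mem_setOf_eq, Finset.mem_insert,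
        Finset.mem_singleton]
      constructor
      · intro he
        rcases eq_or_ne e c with rfl | hec
        · exact Or.inl rfl
        · exact Or.inr (hcon c hc cp e hstep he hec)
      · rintro (rfl | rfl)
        · rfl
        · rw [tail_bar]; exact hstep.1.symm
    rw [Multigraph.deg, hset]
    rw [Finset.card_insert_of_notMem (by simp [hstep.2]), Finset.card_singleton]
end Aux3
section Aux4
open Multigraph

variable {G : Multigraph}

lemma rev_bound (hconn : G.Connected) (hnc : ¬ G.IsCycleGraph) {R : ℕ}
    (hR : ∀ x : G.V, ∃ l : List G.E, G.IsCycle l ∧ ∀ e ∈ l, G.dist x (G.tail e) ≤ R) :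
    ∀ e : G.E, ∃ n ≤ 2*R+5, relWalkLen (SymE G) n e (G.bar e) := by
  intro e
  obtain ⟨l, hl, hdist⟩ := hR (G.tail e)
  obtain ⟨c, hcl, cp, h, hstep, hth, hhc, hhbcp⟩ := exists_branch hconn hnc hl
  have w3 : relWalkLen (SymE G) 3 c (G.bar c) := by
    have s1 : SymE G c cp := Or.inr hstep
    have s2 : SymE G cp h := Or.inl ⟨by rw [hth, hstep.1], hhbcp⟩
    have s3 : SymE G h (G.bar c) := Or.inr (same_tail_step hth.symm hhc)
    exact relWalkLen_trans (relWalkLen_single s1)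
      (relWalkLen_trans (relWalkLen_single s2) (relWalkLen_single s3))
  have hd := hdist c hcl
  have hw := walkLen_dist hconn (G.tail e) (G.tail c)
  obtain ⟨n, hn, w⟩ := rev_along hw rfl ⟨3, le_refl 3, w3⟩ rfl
  exact ⟨n, by omega, w⟩

lemma exists_edge_at (hdeg2 : ∀ x, 2 ≤ G.deg x) (x : G.V) : ∃ e : G.E, G.tail e = x := by
  have h : 0 < (G.locFin x).toFinset.card := lt_of_lt_of_le two_pos (hdeg2 x)
  obtain ⟨e, he⟩ := Finset.card_pos.mp h
  exact ⟨e, by simpa using he⟩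

lemma walk_to_edge (hdeg2 : ∀ x, 2 ≤ G.deg x) :
    ∀ {d : ℕ} {x y : G.V}, G.WalkLen d x y →
    ∀ {e : G.E}, G.tail e = x → ∃ f, G.tail f = y ∧ ∃ n ≤ d, relWalkLen (SymE G) n e f
  | 0, x, y, hxy, e, he => ⟨e, he.trans hxy, 0, le_refl 0, rfl⟩
  | d+1, x, y, hxy, e, he => by
      obtain ⟨z, ⟨g, hg1, hg2⟩, hw⟩ := hxy
      by_cases heg : e = g
      · have hcard : 1 < (G.locFin z).toFinset.card := lt_of_lt_of_le one_lt_two (hdeg2 z)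
        obtain ⟨h, hh, hne⟩ := Finset.exists_mem_ne hcard (G.bar g)
        have hhz : G.tail h = z := by simpa using hh
        have s : SymE G e h := by
          subst heg
          exact Or.inl ⟨by rw [hhz, hg2], hne⟩
        obtain ⟨f, hf, n, hn, w⟩ := walk_to_edge hdeg2 hw hhz
        exact ⟨f, hf, 1+n, by omega, relWalkLen_trans (relWalkLen_single s) w⟩
      · have s : SymE G e (G.bar g) := by
          refine Or.inr ⟨by rw [he, ← hg1, G.head_bar], fun hc => heg ?_⟩
          rw [hc, G.bar_bar]
        obtain ⟨f, hf, n, hn, w⟩ := walk_to_edge hdeg2 hw (e := G.bar g)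
          (by rw [tail_bar, hg2])
        exact ⟨f, hf, 1+n, by omega, relWalkLen_trans (relWalkLen_single s) w⟩

lemma sym_walk_exists (hconn : G.Connected) (hnc : ¬ G.IsCycleGraph)
    (hdeg2 : ∀ x, 2 ≤ G.deg x) {R : ℕ}
    (hR : ∀ x : G.V, ∃ l : List G.E, G.IsCycle l ∧ ∀ e ∈ l, G.dist x (G.tail e) ≤ R)
    (e f : G.E) :
    ∃ n ≤ G.dist (G.tail e) (G.tail f) + (2*R+6), relWalkLen (SymE G) n e f := by
  have hw := walkLen_dist hconn (G.tail e) (G.tail f)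
  obtain ⟨f', hf', n₁, hn₁, w₁⟩ := walk_to_edge hdeg2 hw (e := e) rfl
  by_cases hff : f' = f
  · exact ⟨n₁, by omega, hff ▸ w₁⟩
  · have s : SymE G f' (G.bar f) := Or.inr (same_tail_step (hf'.symm ▸ rfl) hff)
    obtain ⟨n₂, hn₂, w₂⟩ := rev_bound hconn hnc hR f
    have w₂' : relWalkLen (SymE G) n₂ (G.bar f) f := by
      have := relWalkLen_symm (fun _ _ => sym_symm) w₂
      exact this
    refine ⟨n₁ + (1 + n₂), by omega, ?_⟩
    exact relWalkLen_trans w₁ (relWalkLen_trans (relWalkLen_single s) w₂')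

lemma sym_to_walkLen : ∀ {n : ℕ} {e f : G.E}, relWalkLen (SymE G) n e f →
    G.WalkLen n (G.tail e) (G.tail f)
  | 0, e, f, h => by rw [show e = f from h]; rfl
  | n+1, e, f, h => by
      obtain ⟨g, hs, h'⟩ := h
      refine ⟨G.tail g, ?_, sym_to_walkLen h'⟩
      rcases hs with hs | hs
      · exact ⟨e, rfl, hs.1.symm⟩
      · exact ⟨G.bar g, by rw [tail_bar, hs.1], by rw [G.head_bar]⟩

end Aux4


/-- A connected multigraph with `2 ≤ deg ≤ M`, not a cycle and with
dense small cycles, is roughly isometric to its symmetrized oriented line graph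
via `φ(e) = e⁻`. -/
theorem solg_rough_isometry (G : Multigraph) (M : ℕ)
    (hconn : G.Connected) (hdeg : ∀ x, 2 ≤ G.deg x ∧ G.deg x ≤ M)
    (hnc : ¬ G.IsCycleGraph) (hcyc : G.SmallCyclesDense) :
    ∃ A B : ℝ, 1 ≤ A ∧ 0 ≤ B ∧
      (∀ e f : G.E,
        A⁻¹ * (solgDist G e f : ℝ) - A⁻¹ * B ≤ (G.dist (G.tail e) (G.tail f) : ℝ) ∧
        (G.dist (G.tail e) (G.tail f) : ℝ) ≤ A * (solgDist G e f : ℝ) + B) ∧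
      (∀ x : G.V, ∃ e : G.E, (G.dist x (G.tail e) : ℝ) ≤ B) := by
  obtain ⟨R, hR⟩ := hcyc
  have hdeg2 : ∀ x, 2 ≤ G.deg x := fun x => (hdeg x).1
  refine ⟨1, ((2*R+6 : ℕ) : ℝ), le_refl 1, by positivity, ?_, ?_⟩
  · intro e f
    obtain ⟨n₀, hn₀, w₀⟩ := sym_walk_exists hconn hnc hdeg2 hR e f
    have hnem : {n | relWalkLen (SymE G) n e f}.Nonempty := ⟨n₀, w₀⟩
    have hmem : relWalkLen (SymE G) (solgDist G e f) e f := by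
      rw [solgDist_eq]; exact Nat.sInf_mem hnem
    have h1 : G.dist (G.tail e) (G.tail f) ≤ solgDist G e f := dist_le (sym_to_walkLen hmem)
    have h2 : solgDist G e f ≤ G.dist (G.tail e) (G.tail f) + (2*R+6) := by
      rw [solgDist_eq]
      exact le_trans (Nat.sInf_le w₀) hn₀
    constructor
    · rw [inv_one, one_mul, one_mul]
      have := (Nat.cast_le (α := ℝ)).mpr h2
      push_cast at this ⊢
      linarith
    · rw [one_mul]
      have := (Nat.cast_le (α := ℝ)).mpr h1
      have hB : (0:ℝ) ≤ ((2*R+6 : ℕ) : ℝ) := by positivity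
      linarith
  · intro x
    obtain ⟨e, he⟩ := exists_edge_at hdeg2 x
    refine ⟨e, ?_⟩
    have h0 : G.dist x (G.tail e) = 0 :=
      Nat.le_zero.mp (dist_le (show G.WalkLen 0 x (G.tail e) from he.symm))
    rw [h0]
    exact_mod_cast Nat.zero_le _
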